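/- If two wedges at a point p intersect only in p, then their left sides cannot both be non-lefties from p. Equivalently: given two convex hulls C1 = Conv(S1), C2 = Conv(S2) of a convex hull thrackle both having p as a vertex, with C1 ∩ C2 = {p}, and left wedge-sides pb1 and pb2 respectively, at least one of pb1, pb2 is a leftie from p. -/

import Mathlib

open Finset

abbrev Pt : Type := ℝ × ℝ

/-- 2D cross product (determinant) of two vectors. -/
def cross2 (u v : Pt) : ℝ := u.1 * v.2 - u.2 * v.1

/-- The points of `P` are in general position: no three of them are collinear. -/
def GenPos (P : Finset Pt) : Prop :=
  ∀ a ∈ P, ∀ b ∈ P, ∀ c ∈ P, a ≠ b → a ≠ c → b ≠ c → ¬ Collinear ℝ ({a, b, c} : Set Pt)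

/-- The points of `P` are in convex position. -/
def ConvexPos (P : Finset Pt) : Prop :=
  ∀ x ∈ P, x ∉ convexHull ℝ (↑(P.erase x) : Set Pt)

/-- The convex hull of a finite point set. -/
def hull (S : Finset Pt) : Set Pt := convexHull ℝ (↑S : Set Pt)

/-- `C(𝒮)` is a convex hull thrackle on `P`: the sets are subsets of `P`, hulls are
pairwise distinct, no hull is contained in another, any two hulls intersect, and the
intersection of any three distinct hulls is contained in `P`. -/
def CHT (P : Finset Pt) (𝒮 : Finset (Finset Pt)) : Prop :=
  GenPos P ∧
  (∀ S ∈ 𝒮, S ⊆ P) ∧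
  (∀ S ∈ 𝒮, ∀ T ∈ 𝒮, hull S = hull T → S = T) ∧
  (∀ S ∈ 𝒮, ∀ T ∈ 𝒮, S ≠ T → ¬ hull S ⊆ hull T) ∧
  (∀ S ∈ 𝒮, ∀ T ∈ 𝒮, S ≠ T → (hull S ∩ hull T).Nonempty) ∧
  (∀ S ∈ 𝒮, ∀ T ∈ 𝒮, ∀ U ∈ 𝒮, S ≠ T → S ≠ U → T ≠ U →
    hull S ∩ hull T ∩ hull U ⊆ (↑P : Set Pt))

/-- `b` is to the left of the vector from `p` to `a`: the counterclockwise angle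
`a p b` lies in `(0°, 180°]` (the point `p` itself also counts as left). -/
def LeftOf (p a b : Pt) : Prop :=
  0 < cross2 (a - p) (b - p) ∨
    (cross2 (a - p) (b - p) = 0 ∧ (a - p).1 * (b - p).1 + (a - p).2 * (b - p).2 ≤ 0)

/-- The segment `pa` is a leftie from `p` (w.r.t. the family `𝒮`): some member of the
family has its whole convex hull to the left of the vector from `p` to `a`. -/
def IsLeftie (𝒮 : Finset (Finset Pt)) (p a : Pt) : Prop :=
  ∃ S ∈ 𝒮, ∀ b ∈ hull S, LeftOf p a b

/-- `pb` is the left side of the wedge of the hull of `S` at its vertex `p`: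
`b ∈ S`, `b ≠ p` and the whole hull of `S` is (weakly) on the clockwise side of the
vector from `p` to `b`. -/
def IsLeftWedgeSide (S : Finset Pt) (p b : Pt) : Prop :=
  b ∈ S ∧ b ≠ p ∧ ∀ c ∈ hull S, cross2 (b - p) (c - p) ≤ 0


section Helpers

private lemma cross2_smul' (u : Pt) (t : ℝ) (v : Pt) : cross2 u (t • v) = t * cross2 u v := by
  simp only [cross2, Prod.smul_fst, Prod.smul_snd, smul_eq_mul]; ring

private lemma cramer' (u v w : Pt) : cross2 v w • u = cross2 u w • v + cross2 v u • w := by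
  have h1 : (cross2 v w • u).1 = (cross2 u w • v + cross2 v u • w).1 := by
    simp only [cross2, Prod.fst_add, Prod.smul_fst, smul_eq_mul]; ring
  have h2 : (cross2 v w • u).2 = (cross2 u w • v + cross2 v u • w).2 := by
    simp only [cross2, Prod.snd_add, Prod.smul_snd, smul_eq_mul]; ring
  exact Prod.ext h1 h2

private lemma norm2_pos' {u : Pt} (hu : u ≠ 0) : 0 < u.1 ^ 2 + u.2 ^ 2 := by
  have hne : u.1 ≠ 0 ∨ u.2 ≠ 0 := by
    by_contra hc; push_neg at hc; exact hu (Prod.ext hc.1 hc.2)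
  rcases hne with h1 | h1
  · nlinarith [sq_nonneg u.2, (by positivity : (0:ℝ) < u.1 ^ 2)]
  · nlinarith [sq_nonneg u.1, (by positivity : (0:ℝ) < u.2 ^ 2)]

private lemma exists_smul_of_cross2_eq_zero' {u v : Pt} (hu : u ≠ 0) (h : cross2 u v = 0) :
    ∃ t : ℝ, v = t • u := by
  have hd : 0 < u.1 ^ 2 + u.2 ^ 2 := norm2_pos' hu
  have h' : u.1 * v.2 = u.2 * v.1 := by
    have := h; simp only [cross2, sub_eq_zero] at this; exact this
  refine ⟨(u.1 * v.1 + u.2 * v.2) / (u.1 ^ 2 + u.2 ^ 2), Prod.ext ?_ ?_⟩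
  · simp only [Prod.smul_fst, smul_eq_mul]; field_simp; linear_combination (-u.2) * h'
  · simp only [Prod.smul_snd, smul_eq_mul]; field_simp; linear_combination u.1 * h'

private lemma cross2_sum' {ι : Type*} (s : Finset ι) (u : Pt) (f : ι → Pt) :
    cross2 u (∑ i ∈ s, f i) = ∑ i ∈ s, cross2 u (f i) := by
  simp only [cross2, Prod.fst_sum, Prod.snd_sum, Finset.mul_sum, ← Finset.sum_sub_distrib]

private lemma combo_mem' {H : Set Pt} (hH : Convex ℝ H) {p a c : Pt} (hp : p ∈ H) (ha : a ∈ H)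
    (hc : c ∈ H) {α β : ℝ} (hα : 0 ≤ α) (hβ : 0 ≤ β) (hs : α + β ≤ 1) :
    p + (α • (a - p) + β • (c - p)) ∈ H := by
  rcases eq_or_lt_of_le (by linarith : (0:ℝ) ≤ α + β) with h0 | h0
  · have hα0 : α = 0 := by linarith
    have hβ0 : β = 0 := by linarith
    simpa [hα0, hβ0] using hp
  · set s := α + β with hsdef
    have hq : (α / s) • a + (β / s) • c ∈ H :=
      hH ha hc (div_nonneg hα h0.le) (div_nonneg hβ h0.le) (by field_simp; exact hsdef.symm)
    have hz : (1 - s) • p + s • ((α / s) • a + (β / s) • c) ∈ H :=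
      hH hp hq (by linarith) h0.le (by ring)
    have heq : p + (α • (a - p) + β • (c - p))
        = (1 - s) • p + s • ((α / s) • a + (β / s) • c) := by
      rw [smul_add, smul_smul, smul_smul, mul_div_cancel₀ _ h0.ne', mul_div_cancel₀ _ h0.ne']
      rw [smul_sub, smul_sub, sub_smul, one_smul, hsdef, add_smul]
      abel
    rw [heq]; exact hz

private lemma decomp' {cc a b : ℝ} {X U Y : Pt} (hc : cc ≠ 0) (h : cc • X = a • U + b • Y) :
    X = (a / cc) • U + (b / cc) • Y := by
  have h2 := congrArg (fun z : Pt => cc⁻¹ • z) h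
  simp only [smul_smul, smul_add, inv_mul_cancel₀ hc, one_smul] at h2
  rw [h2, div_eq_inv_mul, div_eq_inv_mul]

private lemma overlap' (S1 S2 : Finset Pt) (p : Pt)
    (hmeet : hull S1 ∩ hull S2 = {p})
    (hp1 : p ∈ hull S1) (hp2 : p ∈ hull S2)
    {a1 c1 a2 c2 : Pt} (ha1 : a1 ∈ hull S1) (hc1 : c1 ∈ hull S1)
    (ha2 : a2 ∈ hull S2) (hc2 : c2 ∈ hull S2)
    {α1 β1 α2 β2 : ℝ} (hα1 : 0 ≤ α1) (hβ1 : 0 ≤ β1) (hα2 : 0 ≤ α2) (hβ2 : 0 ≤ β2)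
    (heq : α1 • (a1 - p) + β1 • (c1 - p) = α2 • (a2 - p) + β2 • (c2 - p))
    (hne : α1 • (a1 - p) + β1 • (c1 - p) ≠ 0) : False := by
  set M : ℝ := max 1 (max (α1 + β1) (α2 + β2)) with hM
  have hM1 : (1:ℝ) ≤ M := le_max_left _ _
  have hM0 : (0:ℝ) < M := by linarith
  have hz1 : p + ((M⁻¹ * α1) • (a1 - p) + (M⁻¹ * β1) • (c1 - p)) ∈ hull S1 := by
    apply combo_mem' (convex_convexHull ℝ _) hp1 ha1 hc1 (by positivity) (by positivity)
    have h1 : α1 + β1 ≤ M := le_trans (le_max_left _ _) (le_max_right _ _)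
    rw [← mul_add]
    calc M⁻¹ * (α1 + β1) ≤ M⁻¹ * M := mul_le_mul_of_nonneg_left h1 (by positivity)
      _ = 1 := inv_mul_cancel₀ hM0.ne'
  have hz2 : p + ((M⁻¹ * α1) • (a1 - p) + (M⁻¹ * β1) • (c1 - p)) ∈ hull S2 := by
    have hrw : (M⁻¹ * α1) • (a1 - p) + (M⁻¹ * β1) • (c1 - p)
        = (M⁻¹ * α2) • (a2 - p) + (M⁻¹ * β2) • (c2 - p) := by
      rw [← smul_smul, ← smul_smul, ← smul_add, heq, smul_add, smul_smul, smul_smul]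
    rw [hrw]
    apply combo_mem' (convex_convexHull ℝ _) hp2 ha2 hc2 (by positivity) (by positivity)
    have h1 : α2 + β2 ≤ M := le_trans (le_max_right _ _) (le_max_right _ _)
    rw [← mul_add]
    calc M⁻¹ * (α2 + β2) ≤ M⁻¹ * M := mul_le_mul_of_nonneg_left h1 (by positivity)
      _ = 1 := inv_mul_cancel₀ hM0.ne'
  have hmem : p + ((M⁻¹ * α1) • (a1 - p) + (M⁻¹ * β1) • (c1 - p)) ∈ ({p} : Set Pt) := by
    rw [← hmeet]; exact ⟨hz1, hz2⟩
  rw [Set.mem_singleton_iff] at hmem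
  apply hne
  have h0 : (M⁻¹ * α1) • (a1 - p) + (M⁻¹ * β1) • (c1 - p) = 0 := by
    rwa [add_eq_left] at hmem
  rw [← smul_smul, ← smul_smul, ← smul_add] at h0
  rcases smul_eq_zero.1 h0 with h | h
  · exact absurd h (by positivity)
  · exact h

private lemma face' (P : Finset Pt) (hgp : GenPos P) (S : Finset Pt) (hSP : S ⊆ P)
    (p b : Pt) (hpS : p ∈ S) (hbS : b ∈ S) (hbp : b ≠ p)
    (hside : ∀ c ∈ hull S, cross2 (b - p) (c - p) ≤ 0)
    (x : Pt) (hx : x ∈ hull S) (hx0 : cross2 (b - p) (x - p) = 0) :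
    ∃ t : ℝ, 0 ≤ t ∧ x - p = t • (b - p) := by
  rw [hull, Finset.convexHull_eq] at hx
  obtain ⟨w, hw0, hw1, hwx⟩ := hx
  have hxsum : ∑ y ∈ S, w y • y = x := by
    rw [← hwx, Finset.centerMass_eq_of_sum_1 _ _ hw1]; rfl
  have hXP : x - p = ∑ y ∈ S, w y • (y - p) := by
    have h1 : ∑ y ∈ S, w y • (y - p) = (∑ y ∈ S, w y • y) - (∑ y ∈ S, w y) • p := by
      rw [Finset.sum_smul, ← Finset.sum_sub_distrib]
      exact Finset.sum_congr rfl fun y _ => by rw [smul_sub]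
    rw [h1, hxsum, hw1, one_smul]
  have hcr : ∑ y ∈ S, w y * cross2 (b - p) (y - p) = 0 := by
    have h1 : cross2 (b - p) (x - p) = ∑ y ∈ S, w y * cross2 (b - p) (y - p) := by
      rw [hXP, cross2_sum']
      exact Finset.sum_congr rfl fun y _ => by rw [cross2_smul']
    rw [← h1, hx0]
  have hterm : ∀ y ∈ S, w y * cross2 (b - p) (y - p) = 0 := by
    rw [← Finset.sum_eq_zero_iff_of_nonpos]
    · exact hcr
    · intro y hy
      exact mul_nonpos_of_nonneg_of_nonpos (hw0 y hy)
        (hside y (subset_convexHull ℝ _ (by exact_mod_cast hy)))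
  have hsup : ∀ y ∈ S, y ≠ b → w y • (y - p) = 0 := by
    intro y hyS hyb
    by_cases hyp : y = p
    · simp [hyp]
    · have hw : w y = 0 := by
        rcases mul_eq_zero.1 (hterm y hyS) with h | h
        · exact h
        · exfalso
          obtain ⟨t, ht⟩ := exists_smul_of_cross2_eq_zero' (sub_ne_zero.2 hbp) h
          have hcol : Collinear ℝ ({p, b, y} : Set Pt) := by
            rw [collinear_iff_of_mem (Set.mem_insert p _)]
            refine ⟨b - p, fun q hq => ?_⟩
            rcases hq with rfl | rfl | rfl
            · exact ⟨0, by simp⟩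
            · exact ⟨1, by simp⟩
            · exact ⟨t, by rw [← ht]; simp⟩
          exact hgp p (hSP hpS) b (hSP hbS) y (hSP hyS) (Ne.symm hbp) (Ne.symm hyp)
            (fun h' => hyb h'.symm) hcol
      simp [hw]
  refine ⟨w b, hw0 b hbS, ?_⟩
  rw [hXP, Finset.sum_eq_single_of_mem b hbS (fun y hy hyb => hsup y hy hyb)]

end Helpers

/-- If two wedges at `p` intersect only in `p`, then their left sides cannot both be
non-lefties from `p`: given two hulls of the thrackle having `p` as a vertex with
intersection exactly `{p}`, at least one of their left wedge-sides is a leftie from `p`. -/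

theorem left_sides_not_both_nonlefties (P : Finset Pt) (𝒮 : Finset (Finset Pt))
    (hcht : CHT P 𝒮) (S1 S2 : Finset Pt) (hS1 : S1 ∈ 𝒮) (hS2 : S2 ∈ 𝒮) (hne : S1 ≠ S2)
    (p b1 b2 : Pt) (hp : p ∈ P) (hp1 : p ∈ S1) (hp2 : p ∈ S2)
    (hb1 : IsLeftWedgeSide S1 p b1) (hb2 : IsLeftWedgeSide S2 p b2)
    (hmeet : hull S1 ∩ hull S2 = {p}) :
    IsLeftie 𝒮 p b1 ∨ IsLeftie 𝒮 p b2 := by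
  by_contra hcon
  push_neg at hcon
  obtain ⟨hL1, hL2⟩ := hcon
  obtain ⟨hgp, hsub, -⟩ := hcht
  rw [IsLeftie] at hL1 hL2
  push_neg at hL1 hL2
  obtain ⟨x, hxh, hxL⟩ := hL1 S2 hS2
  obtain ⟨y, hyh, hyL⟩ := hL2 S1 hS1
  obtain ⟨hb1S, hb1p, hside1⟩ := hb1
  obtain ⟨hb2S, hb2p, hside2⟩ := hb2
  have hu0 : b1 - p ≠ 0 := sub_ne_zero.2 hb1p
  have hv0 : b2 - p ≠ 0 := sub_ne_zero.2 hb2p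
  have hp1h : p ∈ hull S1 := subset_convexHull ℝ _ (by exact_mod_cast hp1)
  have hp2h : p ∈ hull S2 := subset_convexHull ℝ _ (by exact_mod_cast hp2)
  have hb1h : b1 ∈ hull S1 := subset_convexHull ℝ _ (by exact_mod_cast hb1S)
  have hb2h : b2 ∈ hull S2 := subset_convexHull ℝ _ (by exact_mod_cast hb2S)
  rw [LeftOf] at hxL hyL
  push_neg at hxL hyL
  -- eliminate the "opposite ray" cases
  have hxcr : cross2 (b1 - p) (x - p) < 0 := by
    rcases lt_or_eq_of_le hxL.1 with h | h
    · exact h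
    · exfalso
      have hdot := hxL.2 h
      obtain ⟨s, hs⟩ := exists_smul_of_cross2_eq_zero' hu0 h
      have hd2 : (b1 - p).1 * (x - p).1 + (b1 - p).2 * (x - p).2
          = s * ((b1 - p).1 ^ 2 + (b1 - p).2 ^ 2) := by
        rw [hs]; simp only [Prod.smul_fst, Prod.smul_snd, smul_eq_mul]; ring
      have hnrm := norm2_pos' hu0
      have hspos : 0 < s := by nlinarith
      exact overlap' S1 S2 p hmeet hp1h hp2h hb1h hb1h hxh hxh
        hspos.le le_rfl zero_le_one le_rfl
        (by rw [hs]; simp) (by simpa using smul_ne_zero hspos.ne' hu0)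
  have hycr : cross2 (b2 - p) (y - p) < 0 := by
    rcases lt_or_eq_of_le hyL.1 with h | h
    · exact h
    · exfalso
      have hdot := hyL.2 h
      obtain ⟨s, hs⟩ := exists_smul_of_cross2_eq_zero' hv0 h
      have hd2 : (b2 - p).1 * (y - p).1 + (b2 - p).2 * (y - p).2
          = s * ((b2 - p).1 ^ 2 + (b2 - p).2 ^ 2) := by
        rw [hs]; simp only [Prod.smul_fst, Prod.smul_snd, smul_eq_mul]; ring
      have hnrm := norm2_pos' hv0
      have hspos : 0 < s := by nlinarith
      exact overlap' S1 S2 p hmeet hp1h hp2h hyh hyh hb2h hb2h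
        zero_le_one le_rfl hspos.le le_rfl
        (by rw [hs]; simp) (by simpa using sub_ne_zero.2 (fun hyp : y = p => by
          rw [hyp] at hs
          exact absurd hs.symm (by simpa using smul_ne_zero hspos.ne' hv0)))
  have hX0 : x - p ≠ 0 := fun h0 => by rw [h0] at hxcr; simp [cross2] at hxcr
  have hY0 : y - p ≠ 0 := fun h0 => by rw [h0] at hycr; simp [cross2] at hycr
  have h2x : cross2 (b2 - p) (x - p) ≤ 0 := hside2 x hxh
  have h1y : cross2 (b1 - p) (y - p) ≤ 0 := hside1 y hyh
  rcases lt_or_eq_of_le h1y with hA | hA0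
  · rcases lt_or_eq_of_le h2x with hB | hB0
    · rcases le_or_gt (cross2 (x - p) (y - p)) 0 with hXY | hXY
      · -- x - p lies in the cone of b1 - p and y - p
        have hid := cramer' (x - p) (b1 - p) (y - p)
        have hdec := decomp' hA.ne hid
        refine overlap' S1 S2 p hmeet hp1h hp2h hb1h hyh hxh hxh
          (α1 := cross2 (x - p) (y - p) / cross2 (b1 - p) (y - p))
          (β1 := cross2 (b1 - p) (x - p) / cross2 (b1 - p) (y - p))
          (α2 := 1) (β2 := 0) ?_ ?_ zero_le_one le_rfl ?_ ?_
        · rw [div_nonneg_iff]; right; exact ⟨hXY, hA.le⟩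
        · rw [div_nonneg_iff]; right; exact ⟨hxcr.le, hA.le⟩
        · simp only [one_smul, zero_smul, add_zero]; exact hdec.symm
        · rw [← hdec]; exact hX0
      · -- y - p lies in the cone of b2 - p and x - p
        have hid := cramer' (y - p) (b2 - p) (x - p)
        have hdec := decomp' hB.ne hid
        have hYX : cross2 (y - p) (x - p) = - cross2 (x - p) (y - p) := by
          simp only [cross2]; ring
        refine overlap' S1 S2 p hmeet hp1h hp2h hyh hyh hb2h hxh
          (α1 := 1) (β1 := 0)
          (α2 := cross2 (y - p) (x - p) / cross2 (b2 - p) (x - p))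
          (β2 := cross2 (b2 - p) (y - p) / cross2 (b2 - p) (x - p))
          zero_le_one le_rfl ?_ ?_ ?_ ?_
        · rw [div_nonneg_iff]; right; exact ⟨by rw [hYX]; linarith, hB.le⟩
        · rw [div_nonneg_iff]; right; exact ⟨hycr.le, hB.le⟩
        · simp only [one_smul, zero_smul, add_zero]; exact hdec
        · simpa using hY0
    · -- x - p is a nonnegative multiple of b2 - p
      obtain ⟨s, hs0, hs⟩ := face' P hgp S2 (hsub S2 hS2) p b2 hp2 hb2S hb2p hside2 x hxh hB0
      have h1 : cross2 (b1 - p) (x - p) = s * cross2 (b1 - p) (b2 - p) := by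
        rw [hs, cross2_smul']
      have huv : cross2 (b1 - p) (b2 - p) < 0 := by
        by_contra hcc; push_neg at hcc; nlinarith
      -- b2 - p lies in the cone of b1 - p and y - p
      have hid := cramer' (b2 - p) (b1 - p) (y - p)
      have hdec := decomp' hA.ne hid
      refine overlap' S1 S2 p hmeet hp1h hp2h hb1h hyh hb2h hb2h
        (α1 := cross2 (b2 - p) (y - p) / cross2 (b1 - p) (y - p))
        (β1 := cross2 (b1 - p) (b2 - p) / cross2 (b1 - p) (y - p))
        (α2 := 1) (β2 := 0) ?_ ?_ zero_le_one le_rfl ?_ ?_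
      · rw [div_nonneg_iff]; right; exact ⟨hycr.le, hA.le⟩
      · rw [div_nonneg_iff]; right; exact ⟨huv.le, hA.le⟩
      · simp only [one_smul, zero_smul, add_zero]; exact hdec.symm
      · rw [← hdec]; exact hv0
  · -- y - p is a nonnegative multiple of b1 - p
    obtain ⟨t, ht0, ht⟩ := face' P hgp S1 (hsub S1 hS1) p b1 hp1 hb1S hb1p hside1 y hyh hA0
    have h1 : cross2 (b2 - p) (y - p) = t * cross2 (b2 - p) (b1 - p) := by
      rw [ht, cross2_smul']
    have hvu : cross2 (b2 - p) (b1 - p) < 0 := by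
      by_contra hcc; push_neg at hcc; nlinarith
    rcases lt_or_eq_of_le h2x with hB | hB0
    · -- b1 - p lies in the cone of b2 - p and x - p
      have hid := cramer' (b1 - p) (b2 - p) (x - p)
      have hdec := decomp' hB.ne hid
      refine overlap' S1 S2 p hmeet hp1h hp2h hb1h hb1h hb2h hxh
        (α1 := 1) (β1 := 0)
        (α2 := cross2 (b1 - p) (x - p) / cross2 (b2 - p) (x - p))
        (β2 := cross2 (b2 - p) (b1 - p) / cross2 (b2 - p) (x - p))
        zero_le_one le_rfl ?_ ?_ ?_ ?_
      · rw [div_nonneg_iff]; right; exact ⟨hxcr.le, hB.le⟩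
      · rw [div_nonneg_iff]; right; exact ⟨hvu.le, hB.le⟩
      · simp only [one_smul, zero_smul, add_zero]; exact hdec
      · simpa using hu0
    · -- both degenerate: contradiction on the sign of cross2 (b1-p) (b2-p)
      obtain ⟨s, hs0, hs⟩ :=
        face' P hgp S2 (hsub S2 hS2) p b2 hp2 hb2S hb2p hside2 x hxh hB0
      have h2 : cross2 (b1 - p) (x - p) = s * cross2 (b1 - p) (b2 - p) := by
        rw [hs, cross2_smul']
      have huv : cross2 (b1 - p) (b2 - p) < 0 := by
        by_contra hcc; push_neg at hcc; nlinarith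
      have hanti : cross2 (b1 - p) (b2 - p) = - cross2 (b2 - p) (b1 - p) := by
        simp only [cross2]; ring
      linarith
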